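/- Let m be a positive integer, K ≥ 0 and α > 0 real numbers. Then ∫₀^∞ f_G(x, m) (∫₀^{αx} f_R(y, K) dy) dx = 1 − (m^m e^{−K} / (Γ(m) (m + α(K+1))^m)) · Σ_{j=0}^∞ (K^j / j!) Σ_{k=0}^j (Γ(k+m)/k!) · (α(K+1)/(m + α(K+1)))^k, where the left-hand side is the probability O_{L,N}(α) that a unit-mean Rician variable with shape K is less than α times an independent unit-mean Gamma variable with shape m. -/

import Mathlib

open Real MeasureTheory

/-- Modified Bessel function of the first kind of order zero. -/
noncomputable def besselI0 (z : ℝ) : ℝ :=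
  ∑' k : ℕ, (z / 2) ^ (2 * k) / ((Nat.factorial k : ℝ)) ^ 2

/-- Unit-mean Nakagami-m (Gamma) density with shape parameter `s`. -/
noncomputable def fG (s x : ℝ) : ℝ :=
  if 0 < x then s ^ s * x ^ (s - 1) * Real.exp (-s * x) / Real.Gamma s else 0

/-- Unit-mean Rician density with shape factor `K`. -/
noncomputable def fR (K y : ℝ) : ℝ :=
  if 0 < y then
    (K + 1) * Real.exp (-K - (K + 1) * y) * besselI0 (Real.sqrt (4 * K * (K + 1) * y))
  else 0

open Set

lemma hasDerivAt_aux (l : ℝ) (j : ℕ) (t : ℝ) :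
    HasDerivAt (fun t => -Real.exp (-(l*t)) * ∑ k ∈ Finset.range (j+1), (l*t)^k / (Nat.factorial k : ℝ))
      (Real.exp (-(l*t)) * ((l*t)^j / (Nat.factorial j : ℝ)) * l) t := by
  have hE : HasDerivAt (fun t : ℝ => -Real.exp (-(l*t))) (Real.exp (-(l*t)) * l) t := by
    have h1 : HasDerivAt (fun t : ℝ => -(l*t)) (-l) t := by
      simpa using ((hasDerivAt_id t).const_mul l).fun_neg
    have := ((Real.hasDerivAt_exp (-(l*t))).comp t h1).fun_neg
    simpa [Function.comp] using this
  have hterm : ∀ k : ℕ, HasDerivAt (fun t => (l*t)^k / (Nat.factorial k : ℝ))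
      (((k : ℝ) * (l*t)^(k-1) * l) / (Nat.factorial k : ℝ)) t := by
    intro k
    have h1 : HasDerivAt (fun t : ℝ => (l*t)) l t := by
      simpa using (hasDerivAt_id t).const_mul l
    exact (h1.pow k).div_const _
  have hP : HasDerivAt (fun t => ∑ k ∈ Finset.range (j+1), (l*t)^k / (Nat.factorial k : ℝ))
      (l * ∑ k ∈ Finset.range j, (l*t)^k / (Nat.factorial k : ℝ)) t := by
    have h := HasDerivAt.fun_sum (fun k (_ : k ∈ Finset.range (j+1)) => hterm k)
    refine h.congr_deriv (Eq.symm ?_)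
    rw [Finset.sum_range_succ', Finset.mul_sum]
    simp only [Nat.cast_zero, zero_mul, Nat.factorial_zero, Nat.cast_one, div_one, add_zero,
      pow_zero]
    refine Finset.sum_congr rfl fun k _ => ?_
    have hk : ((k+1 : ℕ) : ℝ) ≠ 0 := by positivity
    rw [Nat.factorial_succ]
    push_cast
    field_simp
  have h := hE.fun_mul hP
  refine h.congr_deriv (Eq.symm ?_)
  rw [Finset.sum_range_succ]
  ring

lemma integral_Ioo_gamma (l : ℝ) (j : ℕ) {T : ℝ} (hT : 0 ≤ T) :
    ∫ y in Ioo (0:ℝ) T, Real.exp (-(l*y)) * ((l*y)^j / (Nat.factorial j : ℝ)) * l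
      = 1 - Real.exp (-(l*T)) * ∑ k ∈ Finset.range (j+1), (l*T)^k / (Nat.factorial k : ℝ) := by
  have hcont : Continuous fun y : ℝ => Real.exp (-(l*y)) * ((l*y)^j / (Nat.factorial j : ℝ)) * l := by
    fun_prop
  rw [← integral_Ioc_eq_integral_Ioo, ← intervalIntegral.integral_of_le hT,
    intervalIntegral.integral_eq_sub_of_hasDerivAt (fun t _ => hasDerivAt_aux l j t)
      (hcont.intervalIntegrable _ _)]
  have h0 : ∑ k ∈ Finset.range (j+1), (l*(0:ℝ))^k / (Nat.factorial k : ℝ) = 1 := by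
    rw [Finset.sum_eq_single 0]
    · simp
    · intro k _ hk
      simp [zero_pow hk]
    · simp
  rw [h0]
  simp
  ring

lemma fR_eq_tsum (K : ℝ) (hK : 0 ≤ K) {y : ℝ} (hy : 0 < y) :
    fR K y = ∑' j : ℕ, (Real.exp (-K) * (K^j / (Nat.factorial j : ℝ))) *
      (Real.exp (-((K+1)*y)) * (((K+1)*y)^j / (Nat.factorial j : ℝ)) * (K+1)) := by
  rw [fR, if_pos hy, besselI0, ← tsum_mul_left]
  refine tsum_congr fun k => ?_
  have hz : (0:ℝ) ≤ 4*K*(K+1)*y := by positivity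
  have h1 : (Real.sqrt (4*K*(K+1)*y) / 2) ^ (2*k) = (K*((K+1)*y))^k := by
    rw [pow_mul]
    congr 1
    rw [div_pow, sq_sqrt hz]
    ring
  have h2 : Real.exp (-K - (K+1)*y) = Real.exp (-K) * Real.exp (-((K+1)*y)) := by
    rw [← Real.exp_add]; ring_nf
  rw [h1, h2, mul_pow]
  field_simp

lemma expP_le_one {t : ℝ} (ht : 0 ≤ t) (j : ℕ) :
    Real.exp (-t) * ∑ k ∈ Finset.range (j+1), t^k / (Nat.factorial k : ℝ) ≤ 1 := by
  have h := Real.sum_le_exp_of_nonneg ht (j+1)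
  calc Real.exp (-t) * ∑ k ∈ Finset.range (j+1), t^k / (Nat.factorial k : ℝ)
      ≤ Real.exp (-t) * Real.exp t := by
        exact mul_le_mul_of_nonneg_left h (Real.exp_nonneg _)
    _ = 1 := by rw [← Real.exp_add]; simp

lemma inner_integral (K : ℝ) (hK : 0 ≤ K) {T : ℝ} (hT : 0 < T) :
    ∫ y in Ioo (0:ℝ) T, fR K y
      = ∑' j : ℕ, (Real.exp (-K) * (K^j / (Nat.factorial j : ℝ))) *
          (1 - Real.exp (-((K+1)*T)) *
            ∑ k ∈ Finset.range (j+1), ((K+1)*T)^k / (Nat.factorial k : ℝ)) := by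
  have hl : (0:ℝ) < K + 1 := by linarith
  set F : ℕ → ℝ → ℝ := fun j y => (Real.exp (-K) * (K^j / (Nat.factorial j : ℝ))) *
      (Real.exp (-((K+1)*y)) * (((K+1)*y)^j / (Nat.factorial j : ℝ)) * (K+1)) with hF
  have hFcont : ∀ j, Continuous (F j) := by intro j; fun_prop
  have hFnonneg : ∀ j, ∀ y ∈ Ioo (0:ℝ) T, 0 ≤ F j y := by
    intro j y hy
    have : (0:ℝ) ≤ y := hy.1.le
    positivity
  have hFint : ∀ j, IntegrableOn (F j) (Ioo 0 T) :=
    fun j => ((hFcont j).integrableOn_Ioc).mono_set Ioo_subset_Ioc_self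
  have hFval : ∀ j, ∫ y in Ioo (0:ℝ) T, F j y
      = (Real.exp (-K) * (K^j / (Nat.factorial j : ℝ))) *
          (1 - Real.exp (-((K+1)*T)) *
            ∑ k ∈ Finset.range (j+1), ((K+1)*T)^k / (Nat.factorial k : ℝ)) := by
    intro j
    rw [hF]
    simp only []
    rw [MeasureTheory.integral_const_mul, integral_Ioo_gamma (K+1) j hT.le]
  have h1 : ∫ y in Ioo (0:ℝ) T, fR K y = ∫ y in Ioo (0:ℝ) T, ∑' j, F j y := by
    refine setIntegral_congr_fun measurableSet_Ioo fun y hy => ?_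
    exact fR_eq_tsum K hK hy.1
  rw [h1, ← MeasureTheory.integral_tsum_of_summable_integral_norm hFint ?_]
  · exact tsum_congr hFval
  · have hnorm : ∀ j, (∫ y in Ioo (0:ℝ) T, ‖F j y‖) = ∫ y in Ioo (0:ℝ) T, F j y := by
      intro j
      refine setIntegral_congr_fun measurableSet_Ioo fun y hy => ?_
      exact Real.norm_of_nonneg (hFnonneg j y hy)
    refine Summable.of_nonneg_of_le (fun j => ?_) (fun j => ?_)
      ((Real.summable_pow_div_factorial K).mul_left (Real.exp (-K)))
    · exact integral_nonneg fun y => norm_nonneg _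
    · rw [hnorm, hFval]
      have h2 : 0 ≤ Real.exp (-((K+1)*T)) *
            ∑ k ∈ Finset.range (j+1), ((K+1)*T)^k / (Nat.factorial k : ℝ) := by positivity
      have h3 : 0 ≤ Real.exp (-K) * (K^j / (Nat.factorial j : ℝ)) := by positivity
      nlinarith

lemma integrableOn_rpow_exp {a r : ℝ} (ha : 0 < a) (hr : 0 < r) :
    IntegrableOn (fun x : ℝ => x ^ (a-1) * Real.exp (-(r*x))) (Ioi 0) := by
  have h := Real.GammaIntegral_convergent ha
  have h2 : IntegrableOn (fun x : ℝ => Real.exp (-(r*x)) * (r*x) ^ (a-1)) (Ioi 0) := by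
    have := (integrableOn_Ioi_comp_mul_left_iff
      (fun x => Real.exp (-x) * x ^ (a-1)) 0 hr).2
    simpa using this (by simpa using h)
  have h3 := h2.const_mul (r ^ (-(a-1)))
  refine IntegrableOn.congr_fun h3 (fun x hx => ?_) measurableSet_Ioi
  have hx : (0:ℝ) < x := hx
  rw [Real.mul_rpow hr.le hx.le, Real.rpow_neg hr.le]
  have hrp : r ^ (a-1) ≠ 0 := (Real.rpow_pos_of_pos hr _).ne'
  field_simp

lemma fG_mul_eq (m : ℕ) (hm : 0 < m) (k : ℕ) (μ : ℝ) {x : ℝ} (hx : 0 < x) :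
    fG (m : ℝ) x * (Real.exp (-(μ*x)) * x^k)
      = ((m:ℝ)^(m:ℕ) / Real.Gamma m) *
        (x ^ ((((m+k:ℕ)):ℝ) - 1) * Real.exp (-((((m:ℝ))+μ)*x))) := by
  have hm' : (1:ℝ) ≤ (m:ℝ) := by exact_mod_cast hm
  rw [fG, if_pos hx]
  have h1 : (m:ℝ) ^ (m:ℝ) = (m:ℝ)^(m:ℕ) := Real.rpow_natCast _ m
  have h2 : x ^ ((((m+k:ℕ)):ℝ) - 1) = x ^ ((m:ℝ) - 1) * x ^ (k:ℕ) := by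
    rw [← Real.rpow_natCast x k, ← Real.rpow_add hx]
    congr 1
    push_cast
    ring
  have h3 : Real.exp (-((((m:ℝ))+μ)*x)) = Real.exp (-(m:ℝ)*x) * Real.exp (-(μ*x)) := by
    rw [← Real.exp_add]; ring_nf
  rw [h1, h2, h3]
  ring

lemma fG_mul_integrable (m : ℕ) (hm : 0 < m) (k : ℕ) {μ : ℝ} (hμ : 0 ≤ μ) :
    IntegrableOn (fun x => fG (m : ℝ) x * (Real.exp (-(μ*x)) * x^k)) (Ioi 0) := by
  have ha : (0:ℝ) < ((m+k : ℕ):ℝ) := by positivity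
  have hr : (0:ℝ) < (m:ℝ) + μ := by
    have : (0:ℝ) < (m:ℝ) := by exact_mod_cast hm
    linarith
  have h := (integrableOn_rpow_exp ha hr).const_mul ((m:ℝ)^(m:ℕ) / Real.Gamma m)
  exact IntegrableOn.congr_fun h (fun x hx => (fG_mul_eq m hm k μ hx).symm) measurableSet_Ioi

lemma fG_mul_integral (m : ℕ) (hm : 0 < m) (k : ℕ) {μ : ℝ} (hμ : 0 ≤ μ) :
    ∫ x in Ioi (0:ℝ), fG (m : ℝ) x * (Real.exp (-(μ*x)) * x^k)
      = (m:ℝ)^(m:ℕ) * Real.Gamma ((k:ℝ) + m) / (Real.Gamma m * ((m:ℝ)+μ)^(m+k : ℕ)) := by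
  have ha : (0:ℝ) < ((m+k : ℕ):ℝ) := by positivity
  have hr : (0:ℝ) < (m:ℝ) + μ := by
    have : (0:ℝ) < (m:ℝ) := by exact_mod_cast hm
    linarith
  have h1 : ∫ x in Ioi (0:ℝ), fG (m : ℝ) x * (Real.exp (-(μ*x)) * x^k)
      = ∫ x in Ioi (0:ℝ), ((m:ℝ)^(m:ℕ) / Real.Gamma m) *
          (x ^ ((((m+k:ℕ)):ℝ) - 1) * Real.exp (-((((m:ℝ))+μ)*x))) :=
    setIntegral_congr_fun measurableSet_Ioi fun x hx => fG_mul_eq m hm k μ hx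
  rw [h1, MeasureTheory.integral_const_mul, integral_rpow_mul_exp_neg_mul_Ioi ha hr]
  have h2 : ((1:ℝ)/((m:ℝ)+μ)) ^ (((m+k : ℕ)):ℝ) = ((1:ℝ)/((m:ℝ)+μ)) ^ ((m+k : ℕ)) :=
    Real.rpow_natCast _ _
  have h3 : Real.Gamma (((m+k : ℕ)):ℝ) = Real.Gamma ((k:ℝ) + m) := by
    congr 1
    push_cast
    ring
  rw [h2, h3, div_pow, one_pow]
  have h4 : ((m:ℝ)+μ)^(m+k:ℕ) ≠ 0 := by positivity
  field_simp

lemma fG_nonneg (s x : ℝ) (hs : 0 ≤ s) : 0 ≤ fG s x := by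
  rw [fG]
  split
  · have h := Real.Gamma_nonneg_of_nonneg hs
    positivity
  · exact le_refl 0

/-- Appendix A, intermediate double-series form of the outage probability `O_{L,N}(α)`
(LoS Rician desired link with shape `K`, NLoS Nakagami interference with integer shape `m`). -/
theorem outage_L_N_series (m : ℕ) (hm : 0 < m) (K α : ℝ) (hK : 0 ≤ K) (hα : 0 < α) :
    (∫ x in Set.Ioi (0 : ℝ), fG (m : ℝ) x * ∫ y in Set.Ioo 0 (α * x), fR K y) =
      1 - ((m : ℝ) ^ (m : ℕ) * Real.exp (-K) /
            (Real.Gamma m * ((m : ℝ) + α * (K + 1)) ^ (m : ℕ))) *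
        ∑' j : ℕ, (K ^ j / (Nat.factorial j : ℝ)) *
          ∑ k ∈ Finset.range (j + 1),
            (Real.Gamma ((k : ℝ) + m) / (Nat.factorial k : ℝ)) *
              (α * (K + 1) / ((m : ℝ) + α * (K + 1))) ^ k := by
  have hm0 : (0:ℝ) < (m:ℝ) := by exact_mod_cast hm
  have hGm : (0:ℝ) < Real.Gamma m := Real.Gamma_pos_of_pos hm0
  obtain ⟨la, hla_def⟩ : ∃ t : ℝ, t = α * (K + 1) := ⟨_, rfl⟩
  rw [← hla_def]
  have hla : 0 < la := by
    have h1 : (0:ℝ) < K + 1 := by linarith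
    rw [hla_def]; positivity
  obtain ⟨A, hA_def⟩ : ∃ t : ℝ, t = (m:ℝ) + la := ⟨_, rfl⟩
  rw [← hA_def]
  have hA : 0 < A := by rw [hA_def]; positivity
  obtain ⟨a, ha_def⟩ : ∃ f : ℕ → ℝ,
      f = fun j => Real.exp (-K) * (K^j / (Nat.factorial j : ℝ)) := ⟨_, rfl⟩
  have ha_nonneg : ∀ j, 0 ≤ a j := fun j => by simp only [ha_def]; positivity
  have ha_summable : Summable a := by
    rw [ha_def]
    exact (Real.summable_pow_div_factorial K).mul_left (Real.exp (-K))
  have ha_tsum : ∑' j, a j = 1 := by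
    rw [ha_def, tsum_mul_left]
    have h := (NormedSpace.expSeries_div_hasSum_exp K).tsum_eq
    rw [h, ← Real.exp_eq_exp_ℝ, ← Real.exp_add]
    simp
  obtain ⟨c, hc_def⟩ : ∃ f : ℕ → ℝ → ℝ, f = fun j x => a j * fG (m:ℝ) x -
      a j * ∑ k ∈ Finset.range (j+1),
        (la^k / (Nat.factorial k : ℝ)) * (fG (m:ℝ) x * (Real.exp (-(la*x)) * x^k)) := ⟨_, rfl⟩
  have hpt : ∀ x : ℝ, 0 < x →
      fG (m:ℝ) x * ∫ y in Set.Ioo 0 (α * x), fR K y = ∑' j, c j x := by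
    intro x hx
    have hT : 0 < α * x := by positivity
    rw [inner_integral K hK hT, ← tsum_mul_left]
    refine tsum_congr fun j => ?_
    have hmm : (K+1) * (α*x) = la * x := by rw [hla_def]; ring
    rw [hmm]
    have hsum : ∑ k ∈ Finset.range (j+1),
        (la^k / (Nat.factorial k : ℝ)) * (fG (m:ℝ) x * (Real.exp (-(la*x)) * x^k))
        = (fG (m:ℝ) x * Real.exp (-(la*x))) *
            ∑ k ∈ Finset.range (j+1), (la*x)^k / (Nat.factorial k : ℝ) := by
      rw [Finset.mul_sum]
      refine Finset.sum_congr rfl fun k _ => ?_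
      rw [mul_pow]
      ring
    simp only [hc_def, ha_def]
    rw [hsum]
    ring
  have hstep1 : (∫ x in Set.Ioi (0 : ℝ), fG (m : ℝ) x * ∫ y in Set.Ioo 0 (α * x), fR K y)
      = ∫ x in Set.Ioi (0:ℝ), ∑' j, c j x :=
    setIntegral_congr_fun measurableSet_Ioi fun x hx => hpt x hx
  have hfG : IntegrableOn (fG (m:ℝ)) (Ioi 0) := by
    have h := fG_mul_integrable m hm 0 (le_refl (0:ℝ))
    exact IntegrableOn.congr_fun h (fun x _ => by simp) measurableSet_Ioi
  have hfG_one : ∫ x in Ioi (0:ℝ), fG (m:ℝ) x = 1 := by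
    have h := fG_mul_integral m hm 0 (le_refl (0:ℝ))
    have h2 : ∫ x in Ioi (0:ℝ), fG (m : ℝ) x * (Real.exp (-((0:ℝ)*x)) * x^(0:ℕ))
        = ∫ x in Ioi (0:ℝ), fG (m:ℝ) x :=
      setIntegral_congr_fun measurableSet_Ioi fun x _ => by simp
    rw [h2] at h
    rw [h]
    have h3 : Real.Gamma (((0:ℕ):ℝ) + m) = Real.Gamma m := by norm_num
    have h4 : ((m:ℝ) + 0)^(m+0:ℕ) = (m:ℝ)^(m:ℕ) := by norm_num
    rw [h3, h4]
    field_simp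
  have hInt : ∀ k : ℕ, IntegrableOn
      (fun x => fG (m:ℝ) x * (Real.exp (-(la*x)) * x^k)) (Ioi 0) :=
    fun k => fG_mul_integrable m hm k hla.le
  have hc_int : ∀ j, Integrable (c j) (volume.restrict (Ioi 0)) := by
    intro j
    rw [hc_def]
    refine (hfG.const_mul (a j)).sub ?_
    exact (integrable_finset_sum _ (fun k _ => (hInt k).const_mul
      (la^k / (Nat.factorial k : ℝ)))).const_mul (a j)
  obtain ⟨s, hs_def⟩ : ∃ f : ℕ → ℝ, f = fun j => ∑ k ∈ Finset.range (j+1),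
      (la^k / (Nat.factorial k : ℝ)) *
        ((m:ℝ)^(m:ℕ) * Real.Gamma ((k:ℝ) + m) / (Real.Gamma m * A^(m+k:ℕ))) := ⟨_, rfl⟩
  have hs_nonneg : ∀ j, 0 ≤ s j := by
    intro j
    simp only [hs_def]
    refine Finset.sum_nonneg fun k _ => ?_
    have hG : 0 ≤ Real.Gamma ((k:ℝ) + m) :=
      Real.Gamma_nonneg_of_nonneg (by positivity)
    positivity
  have hc_val : ∀ j, ∫ x in Ioi (0:ℝ), c j x = a j - a j * s j := by
    intro j
    simp only [hc_def]
    rw [MeasureTheory.integral_sub (hfG.const_mul (a j))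
      ((integrable_finset_sum _ (fun k _ => (hInt k).const_mul
        (la^k / (Nat.factorial k : ℝ)))).const_mul (a j)),
      MeasureTheory.integral_const_mul, MeasureTheory.integral_const_mul, hfG_one,
      MeasureTheory.integral_finset_sum _ (fun k _ => (hInt k).const_mul
        (la^k / (Nat.factorial k : ℝ)))]
    rw [mul_one]
    simp only [hs_def]
    congr 2
    refine Finset.sum_congr rfl fun k _ => ?_
    rw [MeasureTheory.integral_const_mul, fG_mul_integral m hm k hla.le, hA_def]
  have hc_nonneg : ∀ j, ∀ x ∈ Ioi (0:ℝ), 0 ≤ c j x := by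
    intro j x hx
    have hx : (0:ℝ) < x := hx
    have hsum : ∑ k ∈ Finset.range (j+1),
        (la^k / (Nat.factorial k : ℝ)) * (fG (m:ℝ) x * (Real.exp (-(la*x)) * x^k))
        = (fG (m:ℝ) x * Real.exp (-(la*x))) *
            ∑ k ∈ Finset.range (j+1), (la*x)^k / (Nat.factorial k : ℝ) := by
      rw [Finset.mul_sum]
      refine Finset.sum_congr rfl fun k _ => ?_
      rw [mul_pow]
      ring
    simp only [hc_def]
    rw [hsum]
    have h1 : Real.exp (-(la*x)) *
        ∑ k ∈ Finset.range (j+1), (la*x)^k / (Nat.factorial k : ℝ) ≤ 1 :=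
      expP_le_one (by positivity) j
    have hfg : 0 ≤ fG (m:ℝ) x := fG_nonneg _ _ hm0.le
    have haj := ha_nonneg j
    have hP0 : 0 ≤ Real.exp (-(la*x)) *
        ∑ k ∈ Finset.range (j+1), (la*x)^k / (Nat.factorial k : ℝ) := by
      have : 0 ≤ ∑ k ∈ Finset.range (j+1), (la*x)^k / (Nat.factorial k : ℝ) :=
        Finset.sum_nonneg fun k _ => by positivity
      positivity
    have key : a j * fG (m:ℝ) x -
        a j * (fG (m:ℝ) x * Real.exp (-(la*x)) *
          ∑ k ∈ Finset.range (j+1), (la*x)^k / (Nat.factorial k : ℝ))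
        = a j * fG (m:ℝ) x * (1 - Real.exp (-(la*x)) *
          ∑ k ∈ Finset.range (j+1), (la*x)^k / (Nat.factorial k : ℝ)) := by ring
    rw [key]
    exact mul_nonneg (mul_nonneg haj hfg) (by linarith)
  have hnorm : ∀ j, (∫ x in Ioi (0:ℝ), ‖c j x‖) = ∫ x in Ioi (0:ℝ), c j x := fun j =>
    setIntegral_congr_fun measurableSet_Ioi fun x hx => Real.norm_of_nonneg (hc_nonneg j x hx)
  have hcint_nonneg : ∀ j, 0 ≤ ∫ x in Ioi (0:ℝ), c j x := fun j =>
    setIntegral_nonneg measurableSet_Ioi (hc_nonneg j)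
  have hbound : ∀ j, a j * s j ≤ a j := by
    intro j
    have h := hcint_nonneg j
    rw [hc_val j] at h
    linarith
  have hsummable : Summable fun j => ∫ x in Ioi (0:ℝ), ‖c j x‖ := by
    refine Summable.of_nonneg_of_le (fun j => integral_nonneg fun x => norm_nonneg _)
      (fun j => ?_) ha_summable
    rw [hnorm, hc_val]
    have h := mul_nonneg (ha_nonneg j) (hs_nonneg j)
    linarith
  have hstep2 : ∫ x in Ioi (0:ℝ), ∑' j, c j x = ∑' j, ∫ x in Ioi (0:ℝ), c j x :=
    (MeasureTheory.integral_tsum_of_summable_integral_norm hc_int hsummable).symm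
  have hb_summable : Summable fun j => a j * s j :=
    Summable.of_nonneg_of_le (fun j => mul_nonneg (ha_nonneg j) (hs_nonneg j))
      hbound ha_summable
  have hstep3 : ∑' j, ∫ x in Ioi (0:ℝ), c j x = 1 - ∑' j, a j * s j := by
    calc ∑' j, ∫ x in Ioi (0:ℝ), c j x = ∑' j, (a j - a j * s j) :=
          tsum_congr fun j => hc_val j
      _ = (∑' j, a j) - ∑' j, a j * s j := Summable.tsum_sub ha_summable hb_summable
      _ = 1 - ∑' j, a j * s j := by rw [ha_tsum]
  have hstep4 : ∑' j, a j * s j =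
      ((m : ℝ) ^ (m : ℕ) * Real.exp (-K) / (Real.Gamma m * A ^ (m : ℕ))) *
        ∑' j : ℕ, (K ^ j / (Nat.factorial j : ℝ)) *
          ∑ k ∈ Finset.range (j + 1),
            (Real.Gamma ((k : ℝ) + m) / (Nat.factorial k : ℝ)) * (la / A) ^ k := by
    rw [← tsum_mul_left]
    refine tsum_congr fun j => ?_
    simp only [ha_def, hs_def]
    rw [Finset.mul_sum, Finset.mul_sum, Finset.mul_sum]
    refine Finset.sum_congr rfl fun k _ => ?_
    have hAk : A^(m+k:ℕ) = A^(m:ℕ) * A^(k:ℕ) := pow_add A m k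
    rw [hAk, div_pow]
    have h1 : (Nat.factorial k : ℝ) ≠ 0 := by positivity
    have h2 : (Nat.factorial j : ℝ) ≠ 0 := by positivity
    have h3 : A^(m:ℕ) ≠ 0 := by positivity
    have h4 : A^(k:ℕ) ≠ 0 := by positivity
    field_simp
  rw [hstep1, hstep2, hstep3, hstep4]
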